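/- Let A ⊆ ℕ be a computably enumerable set and let a : ℕ → Bool be its characteristic sequence (a_i = true iff i ∈ A). Then there exists a constant c such that K(a↾n) ≤ c·log₂ n for all n ≥ 2, where a↾n denotes the binary string of the first n bits of a. -/

import Mathlib

/-- Plain Kolmogorov complexity of `x` with respect to decompressor `D`. -/
noncomputable def Kc (D : List Bool →. List Bool) (x : List Bool) : ℕ∞ :=
  sInf {n : ℕ∞ | ∃ p : List Bool, x ∈ D p ∧ (p.length : ℕ∞) = n}

/-- `U` is an optimal decompressor. -/
def OptimalDecompressor (U : List Bool →. List Bool) : Prop :=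
  Partrec U ∧ ∀ D : List Bool →. List Bool, Partrec D →
    ∃ c : ℕ, ∀ x : List Bool, Kc U x ≤ Kc D x + (c : ℕ∞)


open Nat.Partrec (Code)
open Nat.Partrec.Code

/-- little-endian bits to number -/
def fromBits : List Bool → ℕ
  | [] => 0
  | b :: t => (cond b 1 0) + 2 * fromBits t

/-- number to `L` little-endian bits -/
def toBits : ℕ → ℕ → List Bool
  | 0, _ => []
  | L + 1, m => (decide (m % 2 = 1)) :: toBits L (m / 2)

lemma toBits_length : ∀ L m, (toBits L m).length = L
  | 0, _ => rfl
  | L + 1, m => by simp [toBits, toBits_length L]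

lemma fromBits_toBits : ∀ L m, m < 2 ^ L → fromBits (toBits L m) = m
  | 0, m, h => by interval_cases m; rfl
  | L + 1, m, h => by
    have h2 : m / 2 < 2 ^ L := by
      apply Nat.div_lt_of_lt_mul
      rw [pow_succ] at h; omega
    have hc : (cond (decide (m % 2 = 1)) 1 0 : ℕ) = m % 2 := by
      rcases Nat.mod_two_eq_zero_or_one m with h' | h' <;> simp [h']
    simp only [fromBits, toBits, fromBits_toBits L _ h2, hc]
    omega

/-- count of `true`s -/
def cnt : List Bool → ℕ
  | [] => 0
  | b :: t => cond b (cnt t + 1) (cnt t)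

lemma cnt_le_length : ∀ l : List Bool, cnt l ≤ l.length
  | [] => le_refl _
  | b :: t => by
    have := cnt_le_length t
    cases b <;> simp [cnt] <;> omega

lemma cnt_mono {l1 l2 : List Bool}
    (h : List.Forall₂ (fun x y => x = true → y = true) l1 l2) : cnt l1 ≤ cnt l2 := by
  induction h with
  | nil => exact le_refl _
  | cons hxy htail ih =>
    rename_i x y _ _
    cases x <;> cases y <;> simp_all [cnt] <;> omega

lemma cnt_eq {l1 l2 : List Bool}
    (h : List.Forall₂ (fun x y => x = true → y = true) l1 l2) (hc : cnt l1 = cnt l2) :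
    l1 = l2 := by
  induction h with
  | cons hxy htail ih =>
    rename_i x y t1 t2
    have hle := cnt_mono htail
    cases x <;> cases y <;> simp_all [cnt] <;> omega
  | nil => rfl

lemma forall₂_map {f g : ℕ → Bool} {l : List ℕ} (h : ∀ i ∈ l, f i = true → g i = true) :
    List.Forall₂ (fun x y => x = true → y = true) (l.map f) (l.map g) := by
  induction l with
  | nil => simp
  | cons x t ih => simp_all

def F (c0 : Code) (n k s : ℕ) : Option (List Bool) :=
  if cnt ((List.range n).map fun i => (evaln s c0 i).isSome) = k then
    some ((List.range n).map fun i => (evaln s c0 i).isSome) else none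

def D (c0 : Code) : List Bool →. List Bool := fun p =>
  Nat.rfindOpt fun s => F c0 (Nat.unpair (fromBits p)).1 (Nat.unpair (fromBits p)).2 s

lemma fromBits_primrec : Primrec fromBits := by
  have h : Primrec fun q : List Bool × (Bool × ℕ) => (cond q.2.1 1 0) + 2 * q.2.2 :=
    Primrec.nat_add.comp
      (Primrec.cond (Primrec.fst.comp Primrec.snd) (Primrec.const 1) (Primrec.const 0))
      (Primrec.nat_mul.comp (Primrec.const 2) (Primrec.snd.comp Primrec.snd))
  have := Primrec.list_foldr (Primrec.id (α := List Bool)) (Primrec.const 0)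
    (h.to₂ (α := List Bool) (β := Bool × ℕ))
  refine this.of_eq fun l => ?_
  show List.foldr (fun b acc => (cond b 1 0) + 2 * acc) 0 l = fromBits l
  induction l with
  | nil => rfl
  | cons b t ih => simp only [List.foldr_cons, fromBits, ih]

lemma cnt_primrec : Primrec cnt := by
  have h : Primrec fun q : List Bool × (Bool × ℕ) => cond q.2.1 (q.2.2 + 1) q.2.2 :=
    Primrec.cond (Primrec.fst.comp Primrec.snd)
      (Primrec.succ.comp (Primrec.snd.comp Primrec.snd)) (Primrec.snd.comp Primrec.snd)
  have := Primrec.list_foldr (Primrec.id (α := List Bool)) (Primrec.const 0)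
    (h.to₂ (α := List Bool) (β := Bool × ℕ))
  refine this.of_eq fun l => ?_
  show List.foldr (fun b acc => cond b (acc + 1) acc) 0 l = cnt l
  induction l with
  | nil => rfl
  | cons b t ih => simp only [List.foldr_cons, cnt, ih]

lemma D_partrec (c0 : Code) : Partrec (D c0) := by
  have hn : Primrec fun q : List Bool × ℕ => (Nat.unpair (fromBits q.1)).1 :=
    Primrec.fst.comp (Primrec.unpair.comp (fromBits_primrec.comp Primrec.fst))
  have hk : Primrec fun q : List Bool × ℕ => (Nat.unpair (fromBits q.1)).2 :=
    Primrec.snd.comp (Primrec.unpair.comp (fromBits_primrec.comp Primrec.fst))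
  have hev : Primrec fun r : (List Bool × ℕ) × ℕ => (evaln r.1.2 c0 r.2).isSome :=
    Primrec.option_isSome.comp (primrec_evaln.comp
      (Primrec.pair (Primrec.pair (Primrec.snd.comp Primrec.fst) (Primrec.const c0))
        Primrec.snd))
  have hbits : Primrec fun q : List Bool × ℕ =>
      (List.range (Nat.unpair (fromBits q.1)).1).map fun i => (evaln q.2 c0 i).isSome :=
    Primrec.list_map (Primrec.list_range.comp hn) (hev.to₂)
  have hF : Primrec fun q : List Bool × ℕ =>
      F c0 (Nat.unpair (fromBits q.1)).1 (Nat.unpair (fromBits q.1)).2 q.2 := by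
    unfold F
    exact Primrec.ite (PrimrecRel.comp Primrec.eq (cnt_primrec.comp hbits) hk)
      (Primrec.option_some.comp hbits) (Primrec.const none)
  exact Partrec.rfindOpt (hF.to_comp.to₂)


/-- For a computably enumerable set `A ⊆ ℕ` with characteristic sequence `a`,
the prefixes satisfy `K(a↾n) ≤ c·log₂ n` for all `n ≥ 2`. -/
theorem ce_characteristic_sequence_compressible
    (U : List Bool →. List Bool) (hU : OptimalDecompressor U)
    (A : Set ℕ) (hA : REPred (· ∈ A))
    (a : ℕ → Bool) (ha : ∀ i : ℕ, a i = true ↔ i ∈ A) :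
    ∃ c : ℕ, ∀ n : ℕ, 2 ≤ n →
      Kc U ((List.range n).map a) ≤ ((c * Nat.log 2 n : ℕ) : ℕ∞) := by
  -- obtain a code whose domain is A
  have hA' : Nat.Partrec fun n => Part.bind (Encodable.decode (α := ℕ) n)
      fun m => ((Part.assert (m ∈ A) fun _ => Part.some ()).map Encodable.encode) := hA
  obtain ⟨c0, hc0⟩ := Code.exists_code.1 hA'
  have hdom : ∀ i : ℕ, (eval c0 i).Dom ↔ i ∈ A := by
    intro i
    rw [hc0]
    simp [Part.assert, Encodable.decode]
  set b : ℕ → ℕ → Bool := fun s i => (evaln s c0 i).isSome with hb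
  have hba : ∀ s i, b s i = true → a i = true := by
    intro s i h
    rw [Option.isSome_iff_exists] at h
    obtain ⟨x, hx⟩ := h
    have := evaln_sound (k := s) (c := c0) (n := i) (x := x) hx
    rw [ha]
    exact (hdom i).1 (Part.dom_iff_mem.2 ⟨x, this⟩)
  have hab : ∀ i, a i = true → ∃ s, b s i = true := by
    intro i h
    have := (hdom i).2 ((ha i).1 h)
    obtain ⟨x, hx⟩ := Part.dom_iff_mem.1 this
    obtain ⟨s, hs⟩ := evaln_complete.1 hx
    exact ⟨s, Option.isSome_iff_exists.2 ⟨x, hs⟩⟩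
  have hmono : ∀ {s s' i}, s ≤ s' → b s i = true → b s' i = true := by
    intro s s' i hss h
    rw [Option.isSome_iff_exists] at h ⊢
    obtain ⟨x, hx⟩ := h
    exact ⟨x, evaln_mono hss hx⟩
  -- stage at which all of A below n has appeared
  have hstage : ∀ n : ℕ, ∃ s, ∀ i < n, a i = true → b s i = true := by
    intro n
    induction n with
    | zero => exact ⟨0, fun i h => absurd h (Nat.not_lt_zero i)⟩
    | succ n ih =>
      obtain ⟨s, hs⟩ := ih
      by_cases h : a n = true
      · obtain ⟨s', hs'⟩ := hab n h
        refine ⟨max s s', fun i hi hai => ?_⟩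
        rcases Nat.lt_succ_iff_lt_or_eq.1 hi with hi | rfl
        · exact hmono (le_max_left _ _) (hs i hi hai)
        · exact hmono (le_max_right _ _) hs'
      · refine ⟨s, fun i hi hai => ?_⟩
        rcases Nat.lt_succ_iff_lt_or_eq.1 hi with hi | rfl
        · exact hs i hi hai
        · exact absurd hai h
  -- at a full stage, the guessed bits agree with a
  have hfull : ∀ n : ℕ, ∃ s, (List.range n).map (b s) = (List.range n).map a := by
    intro n
    obtain ⟨s, hs⟩ := hstage n
    refine ⟨s, List.map_congr_left fun i hi => ?_⟩
    rw [List.mem_range] at hi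
    cases h : a i with
    | true => exact hs i hi h
    | false =>
      cases h' : b s i with
      | true => rw [hba s i h'] at h; exact h.symm ▸ rfl
      | false => rfl
  set kk : ℕ → ℕ := fun n => cnt ((List.range n).map a) with hkk
  -- membership of the prefix in D c0 on a short program
  have hmem : ∀ n : ℕ,
      ((List.range n).map a) ∈
        D c0 (toBits (2 * Nat.log 2 n + 2) (Nat.pair n (kk n))) := by
    intro n
    set L := 2 * Nat.log 2 n + 2 with hL
    set m := Nat.pair n (kk n) with hm
    have hkn : kk n ≤ n := by
      have := cnt_le_length ((List.range n).map a)
      simpa using this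
    have hmlt : m < 2 ^ L := by
      have h1 : m ≤ n * n + n + kk n := by
        rw [hm, Nat.pair]
        split
        · omega
        · exact le_refl _
      have h2 : n < 2 ^ (Nat.log 2 n + 1) := Nat.lt_pow_succ_log_self (by norm_num) n
      have h3 : n + 1 ≤ 2 ^ (Nat.log 2 n + 1) := h2
      have h4 : (n + 1) * (n + 1) ≤ 2 ^ (Nat.log 2 n + 1) * 2 ^ (Nat.log 2 n + 1) :=
        Nat.mul_le_mul h3 h3
      have h5 : 2 ^ (Nat.log 2 n + 1) * 2 ^ (Nat.log 2 n + 1) = 2 ^ L := by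
        rw [← pow_add, hL]; ring_nf
      calc m ≤ n * n + n + kk n := h1
        _ < (n + 1) * (n + 1) := by nlinarith
        _ ≤ 2 ^ L := h5 ▸ h4
    have hfb : fromBits (toBits L m) = m := fromBits_toBits L m hmlt
    show ((List.range n).map a) ∈ Nat.rfindOpt fun s =>
      F c0 (Nat.unpair (fromBits (toBits L m))).1 (Nat.unpair (fromBits (toBits L m))).2 s
    rw [hfb, Nat.unpair_pair]
    -- monotone rfindOpt
    have key : ∀ {x : List Bool} {s s' : ℕ}, s ≤ s' → x ∈ F c0 n (kk n) s →
        x ∈ F c0 n (kk n) s' := by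
      intro x s s' hss hx
      unfold F at hx ⊢
      split at hx
      · rename_i hcnt
        simp only [Option.mem_def, Option.some.injEq] at hx
        subst hx
        have hcnt1 : cnt ((List.range n).map (b s)) = kk n := hcnt
        have hkka : kk n = cnt ((List.range n).map a) := rfl
        -- bits at stage s equal a-prefix
        have hf1 : List.Forall₂ (fun x y => x = true → y = true)
            ((List.range n).map (b s)) ((List.range n).map a) :=
          forall₂_map fun i _ => hba s i
        have heq1 : (List.range n).map (b s) = (List.range n).map a :=
          cnt_eq hf1 (by omega)
        have hf2 : List.Forall₂ (fun x y => x = true → y = true)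
            ((List.range n).map (b s)) ((List.range n).map (b s')) :=
          forall₂_map fun i _ => hmono hss
        have hf3 : List.Forall₂ (fun x y => x = true → y = true)
            ((List.range n).map (b s')) ((List.range n).map a) :=
          forall₂_map fun i _ => hba s' i
        have hcnt' : cnt ((List.range n).map (b s')) = kk n := by
          have h1 := cnt_mono hf2
          have h2 := cnt_mono hf3
          omega
        have heq2 : (List.range n).map (b s') = (List.range n).map a :=
          cnt_eq hf3 hcnt'
        have hcnt'' : cnt ((List.range n).map fun i => (evaln s' c0 i).isSome) = kk n := hcnt'
        have heq3 : ((List.range n).map fun i => (evaln s' c0 i).isSome)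
            = ((List.range n).map fun i => (evaln s c0 i).isSome) := heq2.trans heq1.symm
        rw [if_pos hcnt'', heq3]
        rfl
      · simp at hx
    rw [Nat.rfindOpt_mono key]
    obtain ⟨s, hs⟩ := hfull n
    refine ⟨s, ?_⟩
    unfold F
    rw [show ((List.range n).map fun i => (evaln s c0 i).isSome) = (List.range n).map (b s)
      from rfl, hs, if_pos rfl]
    simp
  -- complexity bound for D
  have hKcD : ∀ n : ℕ, Kc (D c0) ((List.range n).map a) ≤ ((2 * Nat.log 2 n + 2 : ℕ) : ℕ∞) := by
    intro n
    apply sInf_le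
    exact ⟨toBits (2 * Nat.log 2 n + 2) (Nat.pair n (kk n)), hmem n, by rw [toBits_length]⟩
  obtain ⟨c', hc'⟩ := hU.2 (D c0) (D_partrec c0)
  refine ⟨4 + c', fun n hn => ?_⟩
  have hlog : 1 ≤ Nat.log 2 n := Nat.log_pos (by norm_num) hn
  calc Kc U ((List.range n).map a)
      ≤ Kc (D c0) ((List.range n).map a) + (c' : ℕ∞) := hc' _
    _ ≤ ((2 * Nat.log 2 n + 2 : ℕ) : ℕ∞) + (c' : ℕ∞) := add_le_add_left (hKcD n) _
    _ = ((2 * Nat.log 2 n + 2 + c' : ℕ) : ℕ∞) := by push_cast; ring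
    _ ≤ (((4 + c') * Nat.log 2 n : ℕ) : ℕ∞) := by
        rw [Nat.cast_le]
        nlinarith [hlog]
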